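/- Let {S_γ}_{γ∈Γ} be a family of finitely generated shift-invariant subspaces of L²(ℝⁿ), χ = ∪_{γ∈Γ} S_γ, and S̄_{γ,θ} the closure of S_γ + S_θ. Let Ψ = {ψ_i}_{i∈I} with I a finite index set be such that E(Ψ) is a Bessel sequence in L²(ℝⁿ), and let A : L²(ℝⁿ) → ℓ²(ℤⁿ×I), Af = {⟨f, t_kψ_i⟩}_{i∈I,k∈ℤⁿ}, be the associated sampling operator. If A is stable on χ, then #I ≥ len(S̄_{γ,θ}) for every γ,θ ∈ Γ, i.e. #I ≥ sup_{γ,θ∈Γ} len(S̄_{γ,θ}). -/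

import Mathlib

open MeasureTheory
open scoped ComplexInnerProductSpace

/-- The translation operator `t_k f = f(· − k)` by an integer vector `k ∈ ℤⁿ`,
acting on `L²(ℝⁿ)`. -/
noncomputable def tK {n : ℕ} (k : Fin n → ℤ) :
    Lp ℂ 2 (volume : Measure (Fin n → ℝ)) →+ Lp ℂ 2 (volume : Measure (Fin n → ℝ)) :=
  Lp.compMeasurePreserving (fun x : Fin n → ℝ => x - fun i => (k i : ℝ))
    (measurePreserving_sub_right volume _)

/-- The shift-invariant space `S(Φ)` generated by a set `Φ ⊆ L²(ℝⁿ)`: the closure of the span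
of `E(Φ) = {t_k φ : k ∈ ℤⁿ, φ ∈ Φ}`. -/
noncomputable def shiftSpace {n : ℕ} (Φ : Set (Lp ℂ 2 (volume : Measure (Fin n → ℝ)))) :
    Submodule ℂ (Lp ℂ 2 (volume : Measure (Fin n → ℝ))) :=
  (Submodule.span ℂ {g | ∃ φ ∈ Φ, ∃ k : Fin n → ℤ, g = tK k φ}).topologicalClosure

/-- The length of a finitely generated shift-invariant space: the minimal cardinality of a
finite generating set. -/
noncomputable def len {n : ℕ} (S : Submodule ℂ (Lp ℂ 2 (volume : Measure (Fin n → ℝ)))) : ℕ :=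
  sInf {m : ℕ | ∃ Φ : Set (Lp ℂ 2 (volume : Measure (Fin n → ℝ))),
    Φ.Finite ∧ Φ.ncard = m ∧ S = shiftSpace Φ}

/-! ### Auxiliary material -/

namespace Stmt18Aux

/-- Shorthand for the ambient Hilbert space `L²(ℝⁿ)`. -/
noncomputable abbrev Elp (n : ℕ) := Lp ℂ 2 (volume : Measure (Fin n → ℝ))

/-- The translation operator as a linear isometry. -/
noncomputable def tKL {n : ℕ} (k : Fin n → ℤ) : Elp n →ₗᵢ[ℂ] Elp n :=
  Lp.compMeasurePreservingₗᵢ ℂ (fun x : Fin n → ℝ => x - fun i => (k i : ℝ))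
    (measurePreserving_sub_right volume _)

lemma tKL_apply {n : ℕ} (k : Fin n → ℤ) (f : Elp n) : tKL k f = tK k f := rfl

lemma tK_comp {n : ℕ} (k m : Fin n → ℤ) (f : Elp n) :
    tK k (tK m f) = tK (k + m) f := by
  have hk := measurePreserving_sub_right (volume : Measure (Fin n → ℝ))
    (fun i => (k i : ℝ))
  apply Lp.ext
  calc ⇑(tK k (tK m f))
      =ᵐ[volume] ⇑(tK m f) ∘ (fun x => x - fun i => (k i : ℝ)) :=
        Lp.coeFn_compMeasurePreserving _ _
    _ =ᵐ[volume] (⇑f ∘ (fun x => x - fun i => (m i : ℝ)))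
          ∘ (fun x => x - fun i => (k i : ℝ)) :=
        hk.quasiMeasurePreserving.ae_eq_comp (Lp.coeFn_compMeasurePreserving _ _)
    _ = ⇑f ∘ (fun x => x - fun i => ((k + m) i : ℝ)) := by
        have : (fun i => (((k + m) i : ℤ) : ℝ))
            = (fun i => (k i : ℝ)) + (fun i => (m i : ℝ)) := by
          funext i; push_cast [Pi.add_apply]; ring
        rw [this]; funext x
        simp [Function.comp, sub_sub]
    _ =ᵐ[volume] ⇑(tK (k + m) f) := (Lp.coeFn_compMeasurePreserving _ _).symm

lemma tK_zero {n : ℕ} (f : Elp n) : tK (0 : Fin n → ℤ) f = f := by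
  apply Lp.ext
  have h0 : (fun x : Fin n → ℝ => x - fun i => (((0 : Fin n → ℤ)) i : ℝ)) = id := by
    funext x i; simp
  calc ⇑(tK (0 : Fin n → ℤ) f)
      =ᵐ[volume] ⇑f ∘ (fun x : Fin n → ℝ => x - fun i => (((0 : Fin n → ℤ)) i : ℝ)) :=
        Lp.coeFn_compMeasurePreserving _ _
    _ = ⇑f := by rw [h0, Function.comp_id]

lemma tK_inner {n : ℕ} (k : Fin n → ℤ) (f g : Elp n) :
    ⟪tK k f, tK k g⟫ = ⟪f, g⟫ :=
  (tKL k).inner_map_map f g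

lemma tK_neg_cancel {n : ℕ} (k : Fin n → ℤ) (f : Elp n) :
    tK k (tK (-k) f) = f := by
  rw [tK_comp, add_neg_cancel, tK_zero]

/-- `shiftSpace Φ` is invariant under all the translations `tK k`. -/
lemma shiftSpace_tK_mem {n : ℕ} (Φ : Set (Elp n)) (k : Fin n → ℤ) {x : Elp n}
    (hx : x ∈ shiftSpace Φ) : tK k x ∈ shiftSpace Φ := by
  set s : Set (Elp n) := {g | ∃ φ ∈ Φ, ∃ m : Fin n → ℤ, g = tK m φ} with hs
  have hmaps : Set.MapsTo (⇑(tKL (n := n) k))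
      ((Submodule.span ℂ s : Submodule ℂ (Elp n)) : Set (Elp n))
      ((Submodule.span ℂ s : Submodule ℂ (Elp n)) : Set (Elp n)) := by
    intro y hy
    have : tKL (n := n) k y ∈ (Submodule.span ℂ s).map (tKL (n := n) k).toLinearMap :=
      Submodule.mem_map_of_mem hy
    rw [Submodule.map_span] at this
    refine Submodule.span_le.2 ?_ this
    rintro z ⟨w, ⟨φ, hφ, m, rfl⟩, rfl⟩
    exact Submodule.subset_span ⟨φ, hφ, k + m, by
      simp only [LinearIsometry.coe_toLinearMap, tKL_apply, tK_comp]⟩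
  have hcoe := (Submodule.span ℂ s).topologicalClosure_coe
  have hx0 : x ∈ (Submodule.span ℂ s).topologicalClosure := hx
  have hx' : x ∈ closure ((Submodule.span ℂ s : Submodule ℂ (Elp n)) : Set (Elp n)) := by
    rw [← SetLike.mem_coe, hcoe] at hx0; exact hx0
  have hmem : tKL (n := n) k x ∈
      closure ((Submodule.span ℂ s : Submodule ℂ (Elp n)) : Set (Elp n)) :=
    map_mem_closure (tKL (n := n) k).continuous hx' hmaps
  have : tKL (n := n) k x ∈ (Submodule.span ℂ s).topologicalClosure := by
    rw [← SetLike.mem_coe, hcoe]; exact hmem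
  rw [← tKL_apply]
  exact this

end Stmt18Aux

open Stmt18Aux

set_option maxHeartbeats 1000000 in
/-- Let `{S γ}_{γ ∈ Γ}` be a family of finitely generated shift-invariant
subspaces of `L²(ℝⁿ)`, `χ = ⋃ γ, S γ`, and `S̄_{γ,θ}` the closure of `S γ + S θ`.  Let
`Ψ = {ψ i}_{i ∈ I}` with `I` finite be such that `E(Ψ)` is a Bessel sequence, and
`A f = {⟨f, t_k ψ i⟩}_{i,k}` the associated sampling operator.  If `A` is stable on `χ`, then
`#I ≥ len S̄_{γ,θ}` for every `γ, θ ∈ Γ`. -/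
theorem stmt_18 {n : ℕ}
    {Γ : Type*} (S : Γ → Submodule ℂ (Lp ℂ 2 (volume : Measure (Fin n → ℝ))))
    (hFSIS : ∀ γ : Γ, ∃ Φ : Set (Lp ℂ 2 (volume : Measure (Fin n → ℝ))),
      Φ.Finite ∧ S γ = shiftSpace Φ)
    {I : Type*} [Fintype I]
    (ψ : I → Lp ℂ 2 (volume : Measure (Fin n → ℝ))) (B : ℝ) (hB : 0 < B)
    (hBessel : ∀ h : Lp ℂ 2 (volume : Measure (Fin n → ℝ)),
      ∑' p : (Fin n → ℤ) × I, ‖⟪tK p.1 (ψ p.2), h⟫‖ ^ 2 ≤ B * ‖h‖ ^ 2)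
    (A : Lp ℂ 2 (volume : Measure (Fin n → ℝ)) →L[ℂ] lp (fun _ : (Fin n → ℤ) × I => ℂ) 2)
    (hA : ∀ f : Lp ℂ 2 (volume : Measure (Fin n → ℝ)), ∀ p : (Fin n → ℤ) × I,
      A f p = ⟪tK p.1 (ψ p.2), f⟫)
    (α β : ℝ) (hα : 0 < α) (hαβ : α ≤ β)
    (hstable : ∀ x₁ ∈ ⋃ γ : Γ, (S γ : Set (Lp ℂ 2 (volume : Measure (Fin n → ℝ)))),
      ∀ x₂ ∈ ⋃ γ : Γ, (S γ : Set (Lp ℂ 2 (volume : Measure (Fin n → ℝ)))),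
        α * ‖x₁ - x₂‖ ^ 2 ≤ ‖A x₁ - A x₂‖ ^ 2 ∧ ‖A x₁ - A x₂‖ ^ 2 ≤ β * ‖x₁ - x₂‖ ^ 2) :
    ∀ γ θ : Γ, len ((S γ ⊔ S θ : Submodule ℂ
        (Lp ℂ 2 (volume : Measure (Fin n → ℝ)))).topologicalClosure) ≤ Fintype.card I := by
  classical
  intro γ θ
  set V : Submodule ℂ (Elp n) := (S γ ⊔ S θ).topologicalClosure with hVdef
  have hVclosed : IsClosed (V : Set (Elp n)) := Submodule.isClosed_topologicalClosure _
  haveI : CompleteSpace V := hVclosed.completeSpace_coe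
  -- each `S ρ` is invariant under translations
  have invS : ∀ (ρ : Γ) (k : Fin n → ℤ) (x : Elp n), x ∈ S ρ → tK k x ∈ S ρ := by
    intro ρ k x hx
    obtain ⟨Φ, _, hΦ⟩ := hFSIS ρ
    rw [hΦ] at hx ⊢
    exact shiftSpace_tK_mem Φ k hx
  -- `V` is invariant under translations
  have invV : ∀ (k : Fin n → ℤ) (x : Elp n), x ∈ V → tK k x ∈ V := by
    intro k x hx
    have hx' : x ∈ closure ((S γ ⊔ S θ : Submodule ℂ (Elp n)) : Set (Elp n)) := by
      rw [← SetLike.mem_coe, hVdef, (S γ ⊔ S θ).topologicalClosure_coe] at hx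
      exact hx
    have hmaps : Set.MapsTo (⇑(tKL (n := n) k))
        ((S γ ⊔ S θ : Submodule ℂ (Elp n)) : Set (Elp n))
        ((S γ ⊔ S θ : Submodule ℂ (Elp n)) : Set (Elp n)) := by
      intro y hy
      obtain ⟨a, ha, b, hb, rfl⟩ := Submodule.mem_sup.1 hy
      have heq : tKL (n := n) k (a + b) = tK k a + tK k b := by
        rw [tKL_apply, map_add]
      rw [SetLike.mem_coe, heq]
      exact Submodule.add_mem_sup (invS γ k a ha) (invS θ k b hb)
    have hmem := map_mem_closure (tKL (n := n) k).continuous hx' hmaps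
    rw [← SetLike.mem_coe, hVdef, (S γ ⊔ S θ).topologicalClosure_coe, ← tKL_apply]
    exact hmem
  -- `Vᗮ` is invariant under translations
  have invVperp : ∀ (k : Fin n → ℤ) (x : Elp n), x ∈ Vᗮ → tK k x ∈ Vᗮ := by
    intro k x hx
    rw [Submodule.mem_orthogonal] at hx ⊢
    intro w hw
    have hw' : tK (-k) w ∈ V := invV (-k) w hw
    have h1 : ⟪tK k (tK (-k) w), tK k x⟫ = ⟪tK (-k) w, x⟫ := tK_inner k _ x
    rw [tK_neg_cancel] at h1
    rw [h1]
    exact hx _ hw'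
  -- the lower stability bound extends to all of `V`
  have hlow : ∀ x ∈ V, α * ‖x‖ ^ 2 ≤ ‖A x‖ ^ 2 := by
    have hsub : ((S γ ⊔ S θ : Submodule ℂ (Elp n)) : Set (Elp n))
        ⊆ {x : Elp n | α * ‖x‖ ^ 2 ≤ ‖A x‖ ^ 2} := by
      intro y hy
      obtain ⟨a, ha, b, hb, rfl⟩ := Submodule.mem_sup.1 hy
      have h1 : a ∈ ⋃ ρ : Γ, (S ρ : Set (Elp n)) := Set.mem_iUnion.2 ⟨γ, ha⟩
      have h2 : (-b) ∈ ⋃ ρ : Γ, (S ρ : Set (Elp n)) := Set.mem_iUnion.2 ⟨θ, neg_mem hb⟩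
      have h3 := (hstable a h1 (-b) h2).1
      have h4 : A a - A (-b) = A (a - -b) := (map_sub A a (-b)).symm
      rw [h4, sub_neg_eq_add] at h3
      exact h3
    have hclosed : IsClosed {x : Elp n | α * ‖x‖ ^ 2 ≤ ‖A x‖ ^ 2} :=
      isClosed_le (continuous_const.mul (continuous_norm.pow 2))
        ((A.continuous.norm).pow 2)
    intro x hx
    have hx' : x ∈ closure ((S γ ⊔ S θ : Submodule ℂ (Elp n)) : Set (Elp n)) := by
      rw [← SetLike.mem_coe, hVdef, (S γ ⊔ S θ).topologicalClosure_coe] at hx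
      exact hx
    exact closure_minimal hsub hclosed hx'
  -- the projections of the `ψ i` onto `V`
  set φ : I → Elp n := fun i => (V.orthogonalProjectionOnto (ψ i) : Elp n) with hφdef
  have hφV : ∀ i, φ i ∈ V := fun i => SetLike.coe_mem _
  have hdiff : ∀ i, ψ i - φ i ∈ Vᗮ := fun i =>
    Submodule.sub_starProjection_mem_orthogonal (K := V) (ψ i)
  set W : Submodule ℂ (Elp n) := shiftSpace (Set.range φ) with hWdef
  have hWclosed : IsClosed (W : Set (Elp n)) := by
    rw [hWdef]; exact Submodule.isClosed_topologicalClosure _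
  haveI : CompleteSpace W := hWclosed.completeSpace_coe
  have hWV : W ≤ V := by
    rw [hWdef]
    refine Submodule.topologicalClosure_minimal _ ?_ hVclosed
    rw [Submodule.span_le]
    rintro z ⟨w, ⟨i, rfl⟩, k, rfl⟩
    exact invV k (φ i) (hφV i)
  have hVW : V ≤ W := by
    intro x hx
    set y := x - (W.orthogonalProjectionOnto x : Elp n) with hy
    have hyV : y ∈ V := Submodule.sub_mem _ hx (hWV (SetLike.coe_mem _))
    have hyW : y ∈ Wᗮ := Submodule.sub_starProjection_mem_orthogonal (K := W) x
    have hAy : A y = 0 := by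
      refine lp.ext (funext fun p => ?_)
      simp only [lp.coeFn_zero, Pi.zero_apply]
      have e1 : A y p = ⟪tK p.1 (ψ p.2), y⟫ := hA y p
      have e2 : ⟪tK p.1 (ψ p.2) - tK p.1 (φ p.2), y⟫ = 0 := by
        have hmem : tK p.1 (ψ p.2) - tK p.1 (φ p.2) ∈ Vᗮ := by
          have h := invVperp p.1 _ (hdiff p.2)
          rwa [map_sub] at h
        rw [Submodule.mem_orthogonal] at hmem
        rw [← inner_eq_zero_symm]
        exact hmem y hyV
      have e3 : ⟪tK p.1 (φ p.2), y⟫ = 0 := by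
        have hmem : tK p.1 (φ p.2) ∈ W := by
          rw [hWdef]
          exact Submodule.le_topologicalClosure _
            (Submodule.subset_span ⟨φ p.2, ⟨p.2, rfl⟩, p.1, rfl⟩)
        exact (Submodule.mem_orthogonal _ _).1 hyW _ hmem
      calc (A y) p = ⟪tK p.1 (ψ p.2), y⟫ := e1
        _ = ⟪tK p.1 (φ p.2), y⟫ + ⟪tK p.1 (ψ p.2) - tK p.1 (φ p.2), y⟫ := by
            rw [inner_sub_left]; ring
        _ = 0 := by rw [e2, e3, add_zero]
    have h0 : α * ‖y‖ ^ 2 ≤ 0 := by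
      have hl := hlow y hyV
      rw [hAy, norm_zero] at hl
      simpa using hl
    have hy0 : y = 0 := by
      by_contra hne
      have hpos : 0 < ‖y‖ := norm_pos_iff.2 hne
      linarith [mul_pos hα (pow_pos hpos 2)]
    have hxP : x = (W.orthogonalProjectionOnto x : Elp n) := by
      rwa [hy, sub_eq_zero] at hy0
    rw [hxP]
    exact SetLike.coe_mem _
  have hVeqW : V = shiftSpace (Set.range φ) := (le_antisymm hVW hWV).trans hWdef
  have hmem : (Set.range φ).ncard ∈ {m : ℕ | ∃ Φ : Set (Elp n),
      Φ.Finite ∧ Φ.ncard = m ∧ V = shiftSpace Φ} :=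
    ⟨Set.range φ, Set.finite_range φ, rfl, hVeqW⟩
  have hle : len V ≤ (Set.range φ).ncard := Nat.sInf_le hmem
  have hcard : (Set.range φ).ncard ≤ Fintype.card I := by
    rw [← Set.image_univ]
    calc (φ '' Set.univ).ncard ≤ (Set.univ : Set I).ncard :=
          Set.ncard_image_le Set.finite_univ
      _ = Fintype.card I := by rw [Set.ncard_univ, Nat.card_eq_fintype_card]
  exact hle.trans hcard
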